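/- Fix q ∈ (0,1). For τ ∈ {fwd, bwd} let v₀,τ, v₁,τ > 0 and define L_fix(τ) = -(1/2)·log((1-q)·v₀,τ + q·v₁,τ) and L_inc(τ) = -(1/2)·[(1-q)·log v₀,τ + q·log v₁,τ]. Set Δ_fix = L_fix(fwd) - L_fix(bwd) and Δ_inc = L_inc(fwd) - L_inc(bwd), and let R_τ = v₁,τ/v₀,τ. If R_fwd > 1 and R_bwd > 1, then Δ_inc > Δ_fix if and only if R_fwd > R_bwd. -/

import Mathlib

lemma G_strictMono (q : ℝ) (hq0 : 0 < q) (hq1 : q < 1) :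
    StrictMonoOn (fun R : ℝ => Real.log ((1 - q) + q * R) - q * Real.log R)
      (Set.Ici 1) := by
  apply strictMonoOn_of_deriv_pos (convex_Ici 1)
  · apply ContinuousOn.sub
    · apply ContinuousOn.log
      · exact continuousOn_const.add (continuousOn_const.mul continuousOn_id)
      · intro x hx
        have : (1:ℝ) ≤ x := hx
        nlinarith
    · apply continuousOn_const.mul
      apply ContinuousOn.log continuousOn_id
      intro x hx
      have h1 : (1:ℝ) ≤ x := hx
      simp only [id]
      intro h; rw [h] at h1; linarith
  · intro x hx
    rw [interior_Ici] at hx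
    have hx1 : (1:ℝ) < x := hx
    have hx0 : x ≠ 0 := by positivity
    have hA : 0 < (1 - q) + q * x := by nlinarith
    have h1 : HasDerivAt (fun R : ℝ => Real.log ((1 - q) + q * R))
        (q / ((1 - q) + q * x)) x := by
      have hi : HasDerivAt (fun R : ℝ => (1 - q) + q * R) q x := by
        simpa using ((hasDerivAt_id x).const_mul q).const_add (1 - q)
      simpa using hi.log hA.ne'
    have h2 : HasDerivAt (fun R : ℝ => q * Real.log R) (q * x⁻¹) x :=
      (Real.hasDerivAt_log hx0).const_mul q
    have h3 : HasDerivAt (fun R : ℝ => Real.log ((1 - q) + q * R) - q * Real.log R)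
        (q / ((1 - q) + q * x) - q * x⁻¹) x := h1.sub h2
    rw [h3.deriv]
    have hlt : (1 - q) + q * x < x := by nlinarith
    have : q * x⁻¹ < q / ((1 - q) + q * x) := by
      rw [show q * x⁻¹ = q / x by ring]
      exact div_lt_div_of_pos_left hq0 hA hlt
    linarith

theorem missingness_amplification (q v0f v1f v0b v1b : ℝ)
    (hq0 : 0 < q) (hq1 : q < 1)
    (hv0f : 0 < v0f) (hv1f : 0 < v1f) (hv0b : 0 < v0b) (hv1b : 0 < v1b)
    (hRf : 1 < v1f / v0f) (hRb : 1 < v1b / v0b) :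
    (-(1 / 2) * ((1 - q) * Real.log v0f + q * Real.log v1f)
        - (-(1 / 2) * ((1 - q) * Real.log v0b + q * Real.log v1b))
      > -(1 / 2) * Real.log ((1 - q) * v0f + q * v1f)
        - (-(1 / 2) * Real.log ((1 - q) * v0b + q * v1b)))
    ↔ v1f / v0f > v1b / v0b := by
  set Rf := v1f / v0f with hRfdef
  set Rb := v1b / v0b with hRbdef
  have hAf : (1 - q) * v0f + q * v1f = v0f * ((1 - q) + q * Rf) := by
    rw [hRfdef]; field_simp
  have hAb : (1 - q) * v0b + q * v1b = v0b * ((1 - q) + q * Rb) := by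
    rw [hRbdef]; field_simp
  have hAfpos : 0 < (1 - q) + q * Rf := by nlinarith
  have hAbpos : 0 < (1 - q) + q * Rb := by nlinarith
  have hlogAf : Real.log ((1 - q) * v0f + q * v1f)
      = Real.log v0f + Real.log ((1 - q) + q * Rf) := by
    rw [hAf, Real.log_mul hv0f.ne' hAfpos.ne']
  have hlogAb : Real.log ((1 - q) * v0b + q * v1b)
      = Real.log v0b + Real.log ((1 - q) + q * Rb) := by
    rw [hAb, Real.log_mul hv0b.ne' hAbpos.ne']
  have hlogv1f : Real.log v1f = Real.log v0f + Real.log Rf := by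
    rw [hRfdef, Real.log_div hv1f.ne' hv0f.ne']; ring
  have hlogv1b : Real.log v1b = Real.log v0b + Real.log Rb := by
    rw [hRbdef, Real.log_div hv1b.ne' hv0b.ne']; ring
  have key := (G_strictMono q hq0 hq1).lt_iff_lt (a := Rb) (b := Rf)
    hRb.le hRf.le
  rw [hlogAf, hlogAb, hlogv1f, hlogv1b]
  constructor
  · intro h; exact key.mp (by linarith)
  · intro h
    have := key.mpr h
    linarith
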